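/- There exists a fuzzy continuous linear operator between fuzzy strong φ-b-normed linear spaces that is not fuzzy bounded. Concretely: let (X, ‖·‖) be a nontrivial normed linear space, let N₁(x,t) = 1 if t > ‖x‖, = 1/2 if 0 < t < ‖x‖ (take also N₁(x,‖x‖)=1/2 for x ≠ 0), = 0 if t ≤ 0, and N₂(x,t) = 1 − ‖x‖/t if t ≥ ‖x‖ and t > 0, = 0 otherwise. With * = min, φ(α) = |α|, K = 1, both (X, N₁) and (X, N₂) are fuzzy strong φ-b-normed linear spaces, and the operator T : (X, N₁) → (X, N₂), Tx = 2x, is fuzzy continuous but not fuzzy bounded. -/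

import Mathlib

open Filter Topology

structure PhiFun (φ : ℝ → ℝ) : Prop where
  even : ∀ t, φ (-t) = φ t
  one : φ 1 = 1
  strictMono : StrictMonoOn φ (Set.Ioi 0)
  contOn : ContinuousOn φ (Set.Ioi 0)
  tendsto_zero : Tendsto φ (nhdsWithin 0 (Set.Ioi 0)) (nhds 0)
  tendsto_atTop : Tendsto φ atTop atTop

structure IsTNorm (star : ℝ → ℝ → ℝ) : Prop where
  mem : ∀ a ∈ Set.Icc (0:ℝ) 1, ∀ b ∈ Set.Icc (0:ℝ) 1, star a b ∈ Set.Icc (0:ℝ) 1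
  assoc : ∀ a b c, star (star a b) c = star a (star b c)
  comm : ∀ a b, star a b = star b a
  one_right : ∀ a ∈ Set.Icc (0:ℝ) 1, star a 1 = a
  mono : ∀ a b c d, a ≤ b → c ≤ d → star a c ≤ star b d

structure IsFuzzyPhiBNorm {X : Type*} [AddCommGroup X] [Module ℝ X]
    (N : X → ℝ → ℝ) (φ : ℝ → ℝ) (K : ℝ) (star : ℝ → ℝ → ℝ) : Prop where
  one_le_K : 1 ≤ K
  phi : PhiFun φ
  tnorm : IsTNorm star
  mem : ∀ x t, N x t ∈ Set.Icc (0:ℝ) 1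
  bN1 : ∀ x : X, ∀ t ≤ (0:ℝ), N x t = 0
  bN2 : ∀ x : X, (∀ t > (0:ℝ), N x t = 1) ↔ x = 0
  bN3 : ∀ (c : ℝ) (x : X), ∀ t > (0:ℝ), φ c ≠ 0 → N (c • x) t = N x (t / φ c)
  bN4 : ∀ (x y : X) (s t : ℝ), star (N x s) (N y t) ≤ N (x + y) (s + K * t)
  bN5 : ∀ x : X, Monotone (N x) ∧ Tendsto (N x) atTop (nhds 1)

noncomputable def FuzzyBounded {X Y : Type*} [AddCommGroup X] [Module ℝ X]
    [AddCommGroup Y] [Module ℝ Y]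
    (N1 : X → ℝ → ℝ) (N2 : Y → ℝ → ℝ) (K : ℝ) (T : X →ₗ[ℝ] Y) : Prop :=
  ∀ α ∈ Set.Ioo (0:ℝ) 1, ∃ M > (0:ℝ), ∀ x : X,
    sInf {t | 0 < t ∧ α ≤ N2 (T x) (K * t)} ≤ M * sInf {t | 0 < t ∧ 1 - α ≤ N1 x t}

def FConv {Y : Type*} [AddCommGroup Y]
    (N : Y → ℝ → ℝ) (y : ℕ → Y) (l : Y) : Prop :=
  ∀ t > (0:ℝ), Tendsto (fun n => N (y n - l) t) atTop (nhds 1)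

def FContAt {X Y : Type*} [AddCommGroup X] [Module ℝ X] [AddCommGroup Y] [Module ℝ Y]
    (N1 : X → ℝ → ℝ) (N2 : Y → ℝ → ℝ) (T : X →ₗ[ℝ] Y) (x : X) : Prop :=
  ∀ xs : ℕ → X, FConv N1 xs x → FConv N2 (fun n => T (xs n)) (T x)

noncomputable def Nex1 {X : Type*} [NormedAddCommGroup X] (x : X) (t : ℝ) : ℝ :=
  if ‖x‖ < t then 1 else if 0 < t then 1/2 else 0

noncomputable def Nex2 {X : Type*} [NormedAddCommGroup X] (x : X) (t : ℝ) : ℝ :=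
  if ‖x‖ ≤ t ∧ 0 < t then 1 - ‖x‖ / t else 0

section Aux
variable {X : Type*} [NormedAddCommGroup X]

lemma nex1_mem (x : X) (t : ℝ) : Nex1 x t ∈ Set.Icc (0:ℝ) 1 := by
  unfold Nex1; split_ifs <;> norm_num

lemma nex1_zero_of_nonpos (x : X) {t : ℝ} (ht : t ≤ 0) : Nex1 x t = 0 := by
  have h1 : ¬ ‖x‖ < t := not_lt.2 (ht.trans (norm_nonneg x))
  simp [Nex1, h1, not_lt.2 ht]

lemma nex1_half_le (x : X) {t : ℝ} (ht : 0 < t) : 1/2 ≤ Nex1 x t := by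
  unfold Nex1; split_ifs <;> norm_num

lemma nex1_mono (x : X) : Monotone (Nex1 x) := by
  intro a b hab
  unfold Nex1
  split_ifs <;> norm_num <;> linarith

lemma nex2_nonneg (x : X) (t : ℝ) : 0 ≤ Nex2 x t := by
  unfold Nex2; split_ifs with h
  · rw [sub_nonneg]; exact (div_le_one h.2).2 h.1
  · exact le_refl _

lemma nex2_mem (x : X) (t : ℝ) : Nex2 x t ∈ Set.Icc (0:ℝ) 1 := by
  refine ⟨nex2_nonneg x t, ?_⟩
  unfold Nex2; split_ifs with h
  · have : 0 ≤ ‖x‖ / t := div_nonneg (norm_nonneg x) h.2.le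
    linarith
  · norm_num

lemma nex2_mono (x : X) : Monotone (Nex2 x) := by
  intro a b hab
  unfold Nex2
  split_ifs with h1 h2 h2
  · gcongr
    exact h1.2
  · exact absurd ⟨h1.1.trans hab, h1.2.trans_le hab⟩ h2
  · rw [sub_nonneg]; exact (div_le_one h2.2).2 h2.1
  · exact le_refl _

lemma nex1_bn2 (x : X) : (∀ t > (0:ℝ), Nex1 x t = 1) ↔ x = 0 := by
  constructor
  · intro h
    by_contra hx
    have hx' : 0 < ‖x‖ := norm_pos_iff.2 hx
    have := h ‖x‖ hx'
    simp [Nex1, lt_irrefl, hx'] at this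
  · intro h t ht
    simp [Nex1, h, ht]

lemma nex2_bn2 (x : X) : (∀ t > (0:ℝ), Nex2 x t = 1) ↔ x = 0 := by
  constructor
  · intro h
    by_contra hx
    have hx' : 0 < ‖x‖ := norm_pos_iff.2 hx
    have := h ‖x‖ hx'
    rw [Nex2, if_pos ⟨le_refl _, hx'⟩, div_self hx'.ne'] at this
    norm_num at this
  · intro h t ht
    simp [Nex2, h, ht, ht.le]

lemma nex1_tendsto (x : X) : Filter.Tendsto (Nex1 x) Filter.atTop (nhds 1) := by
  have h : ∀ᶠ t in Filter.atTop, Nex1 x t = 1 := by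
    filter_upwards [Filter.eventually_gt_atTop ‖x‖] with t ht
    simp [Nex1, ht]
  exact Filter.Tendsto.congr' (h.mono fun t ht => ht.symm) tendsto_const_nhds

lemma nex2_tendsto (x : X) : Filter.Tendsto (Nex2 x) Filter.atTop (nhds 1) := by
  have h : ∀ᶠ t in Filter.atTop, Nex2 x t = 1 - ‖x‖ / t := by
    filter_upwards [Filter.eventually_ge_atTop ‖x‖, Filter.eventually_gt_atTop 0] with t h1 h2
    simp [Nex2, h1, h2]
  have h2 : Filter.Tendsto (fun t : ℝ => 1 - ‖x‖ / t) Filter.atTop (nhds 1) := by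
    have := Filter.Tendsto.div_atTop (tendsto_const_nhds (x := ‖x‖)) Filter.tendsto_id
    simpa using tendsto_const_nhds.sub this
  exact Filter.Tendsto.congr' (h.mono fun t ht => ht.symm) h2

variable [NormedSpace ℝ X]

lemma nex1_bn3 (c : ℝ) (x : X) {t : ℝ} (ht : 0 < t) (hc : |c| ≠ 0) :
    Nex1 (c • x) t = Nex1 x (t / |c|) := by
  have hc' : 0 < |c| := lt_of_le_of_ne (abs_nonneg c) (Ne.symm hc)
  have hn : ‖c • x‖ = |c| * ‖x‖ := by rw [norm_smul, Real.norm_eq_abs]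
  have hcond : ‖c • x‖ < t ↔ ‖x‖ < t / |c| := by
    rw [hn, lt_div_iff₀ hc', mul_comm]
  have hpos : 0 < t / |c| := div_pos ht hc'
  by_cases h : ‖x‖ < t / |c|
  · rw [Nex1, if_pos (hcond.2 h), Nex1, if_pos h]
  · rw [Nex1, if_neg (fun hh => h (hcond.1 hh)), if_pos ht, Nex1, if_neg h, if_pos hpos]

lemma nex2_bn3 (c : ℝ) (x : X) {t : ℝ} (ht : 0 < t) (hc : |c| ≠ 0) :
    Nex2 (c • x) t = Nex2 x (t / |c|) := by
  have hc' : 0 < |c| := lt_of_le_of_ne (abs_nonneg c) (Ne.symm hc)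
  have hn : ‖c • x‖ = |c| * ‖x‖ := by rw [norm_smul, Real.norm_eq_abs]
  have hpos : 0 < t / |c| := div_pos ht hc'
  have hcond : (‖c • x‖ ≤ t ∧ 0 < t) ↔ (‖x‖ ≤ t / |c| ∧ 0 < t / |c|) := by
    rw [hn, le_div_iff₀ hc', mul_comm]
    exact ⟨fun h => ⟨h.1, hpos⟩, fun h => ⟨h.1, ht⟩⟩
  have hval : ‖c • x‖ / t = ‖x‖ / (t / |c|) := by
    rw [hn]; field_simp
  by_cases h : ‖x‖ ≤ t / |c| ∧ 0 < t / |c|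
  · rw [Nex2, if_pos (hcond.2 h), Nex2, if_pos h, hval]
  · rw [Nex2, if_neg (fun hh => h (hcond.1 hh)), Nex2, if_neg h]

lemma nex1_bn4 (x y : X) (s t : ℝ) :
    min (Nex1 x s) (Nex1 y t) ≤ Nex1 (x + y) (s + 1 * t) := by
  rw [one_mul]
  rcases le_or_gt s 0 with hs | hs
  · exact le_trans (min_le_left _ _)
      ((nex1_zero_of_nonpos x hs).le.trans (nex1_mem (x+y) (s+t)).1)
  rcases le_or_gt t 0 with ht | ht
  · exact le_trans (min_le_right _ _)
      ((nex1_zero_of_nonpos y ht).le.trans (nex1_mem (x+y) (s+t)).1)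
  have hst : 0 < s + t := by linarith
  by_cases hx : ‖x‖ < s
  · by_cases hy : ‖y‖ < t
    · have hlt : ‖x + y‖ < s + t := lt_of_le_of_lt (norm_add_le x y) (by linarith)
      have h1 : Nex1 (x + y) (s + t) = 1 := by rw [Nex1, if_pos hlt]
      rw [h1]
      exact (min_le_left _ _).trans (nex1_mem x s).2
    · refine (min_le_right _ _).trans ?_
      rw [Nex1, if_neg hy, if_pos ht]
      exact nex1_half_le _ hst
  · refine (min_le_left _ _).trans ?_
    rw [Nex1, if_neg hx, if_pos hs]
    exact nex1_half_le _ hst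

lemma nex2_bn4 (x y : X) (s t : ℝ) :
    min (Nex2 x s) (Nex2 y t) ≤ Nex2 (x + y) (s + 1 * t) := by
  rw [one_mul]
  by_cases hx : ‖x‖ ≤ s ∧ 0 < s
  · by_cases hy : ‖y‖ ≤ t ∧ 0 < t
    · have hs := hx.2; have ht := hy.2
      have hst : 0 < s + t := by linarith
      have hxy : ‖x + y‖ ≤ s + t := (norm_add_le x y).trans (by linarith [hx.1, hy.1])
      rw [Nex2, if_pos hx, Nex2, if_pos hy, Nex2, if_pos ⟨hxy, hst⟩]
      have hc : ‖x + y‖ ≤ ‖x‖ + ‖y‖ := norm_add_le x y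
      rcases le_total (‖x‖ / s) (‖y‖ / t) with hmax | hmax
      · refine (min_le_right _ _).trans ?_
        have key : ‖x + y‖ / (s + t) ≤ ‖y‖ / t := by
          rw [div_le_div_iff₀ hst ht]
          rw [div_le_div_iff₀ hs ht] at hmax
          nlinarith [mul_nonneg (sub_nonneg.2 hc) ht.le]
        linarith
      · refine (min_le_left _ _).trans ?_
        have key : ‖x + y‖ / (s + t) ≤ ‖x‖ / s := by
          rw [div_le_div_iff₀ hst hs]
          rw [div_le_div_iff₀ ht hs] at hmax
          nlinarith [mul_nonneg (sub_nonneg.2 hc) hs.le]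
        linarith
    · refine (min_le_right _ _).trans ?_
      rw [Nex2, if_neg hy]
      exact nex2_nonneg _ _
  · refine (min_le_left _ _).trans ?_
    rw [Nex2, if_neg hx]
    exact nex2_nonneg _ _

end Aux

lemma phiFun_abs : PhiFun (fun c : ℝ => |c|) := by
  refine ⟨fun t => abs_neg t, abs_one, ?_, continuous_abs.continuousOn, ?_, ?_⟩
  · intro a ha b hb hab
    simpa [abs_of_pos (Set.mem_Ioi.1 ha), abs_of_pos (Set.mem_Ioi.1 hb)] using hab
  · have := (continuous_abs.tendsto (0:ℝ)).mono_left (nhdsWithin_le_nhds (s := Set.Ioi 0))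
    simpa using this
  · exact tendsto_abs_atTop_atTop

lemma isTNorm_min : IsTNorm min := by
  refine ⟨?_, fun a b c => min_assoc a b c, fun a b => min_comm a b, ?_, ?_⟩
  · intro a ha b hb
    exact ⟨le_min ha.1 hb.1, (min_le_left a b).trans ha.2⟩
  · intro a ha
    exact min_eq_left ha.2
  · intro a b c d hab hcd
    exact min_le_min hab hcd

theorem stmt6 {X : Type*} [NormedAddCommGroup X] [NormedSpace ℝ X] [Nontrivial X] :
    IsFuzzyPhiBNorm (Nex1 (X := X)) (fun c => |c|) 1 min ∧
    IsFuzzyPhiBNorm (Nex2 (X := X)) (fun c => |c|) 1 min ∧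
    (∀ x : X, FContAt Nex1 Nex2 ((2:ℝ) • (LinearMap.id : X →ₗ[ℝ] X)) x) ∧
    ¬ FuzzyBounded Nex1 Nex2 1 ((2:ℝ) • (LinearMap.id : X →ₗ[ℝ] X)) := by
  refine ⟨?_, ?_, ?_, ?_⟩
  · exact ⟨le_refl 1, phiFun_abs, isTNorm_min, nex1_mem,
      fun x t ht => nex1_zero_of_nonpos x ht, nex1_bn2,
      fun c x t ht hc => nex1_bn3 c x ht hc, nex1_bn4,
      fun x => ⟨nex1_mono x, nex1_tendsto x⟩⟩
  · exact ⟨le_refl 1, phiFun_abs, isTNorm_min, nex2_mem,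
      fun x t ht => by
        have hcond : ¬(‖x‖ ≤ t ∧ 0 < t) := fun h => absurd h.2 (not_lt.2 ht)
        rw [Nex2, if_neg hcond],
      nex2_bn2, fun c x t ht hc => nex2_bn3 c x ht hc, nex2_bn4,
      fun x => ⟨nex2_mono x, nex2_tendsto x⟩⟩
  · -- fuzzy continuity
    intro x xs hxs t ht
    have key : ∀ δ > (0:ℝ), ∀ᶠ n in atTop, ‖xs n - x‖ < δ := by
      intro δ hδ
      have h := (hxs δ hδ).eventually (eventually_gt_nhds (by norm_num : (1:ℝ)/2 < 1))
      filter_upwards [h] with n hn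
      by_contra hc
      push_neg at hc
      have : Nex1 (xs n - x) δ = 1/2 := by simp [Nex1, not_lt.2 hc, hδ]
      rw [this] at hn
      exact lt_irrefl _ hn
    have hT : ∀ n, ((2:ℝ) • (LinearMap.id : X →ₗ[ℝ] X)) (xs n)
        - ((2:ℝ) • (LinearMap.id : X →ₗ[ℝ] X)) x = (2:ℝ) • (xs n - x) := by
      intro n; simp [smul_sub]
    rw [Metric.tendsto_atTop]
    intro ε hε
    have hδ : 0 < min (t/2) (ε * t / 2) := lt_min (by linarith) (by positivity)
    obtain ⟨N, hN⟩ := (atTop_basis.eventually_iff.1 (key _ hδ))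
    refine ⟨N, fun n hn => ?_⟩
    have hd : ‖xs n - x‖ < min (t/2) (ε * t / 2) := hN.2 hn
    have h2 : ‖(2:ℝ) • (xs n - x)‖ = 2 * ‖xs n - x‖ := by
      rw [norm_smul]; norm_num
    have hc1 : ‖(2:ℝ) • (xs n - x)‖ ≤ t := by
      rw [h2]
      have := hd.trans_le (min_le_left _ _)
      linarith
    have hval : Nex2 ((2:ℝ) • (xs n - x)) t = 1 - ‖(2:ℝ) • (xs n - x)‖ / t := by
      rw [Nex2, if_pos ⟨hc1, ht⟩]
    rw [hT n, hval, Real.dist_eq]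
    have hlt : ‖(2:ℝ) • (xs n - x)‖ / t < ε := by
      rw [h2, div_lt_iff₀ ht]
      have := hd.trans_le (min_le_right _ _)
      nlinarith
    have hge : 0 ≤ ‖(2:ℝ) • (xs n - x)‖ / t := div_nonneg (norm_nonneg _) ht.le
    rw [show (1 : ℝ) - ‖(2:ℝ) • (xs n - x)‖ / t - 1 = -(‖(2:ℝ) • (xs n - x)‖ / t) by ring,
      abs_neg, abs_of_nonneg hge]
    exact hlt
  · -- not fuzzy bounded
    intro h
    obtain ⟨x, hx⟩ := exists_ne (0 : X)
    obtain ⟨M, hM, hineq⟩ := h (1/2) (by norm_num)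
    have hx' : 0 < ‖x‖ := norm_pos_iff.2 hx
    have hTx : ((2:ℝ) • (LinearMap.id : X →ₗ[ℝ] X)) x = (2:ℝ) • x := by simp
    have hTxn : ‖((2:ℝ) • (LinearMap.id : X →ₗ[ℝ] X)) x‖ = 2 * ‖x‖ := by
      rw [hTx, norm_smul]; norm_num
    have h1 : sInf {t | 0 < t ∧ 1 - 1/2 ≤ Nex1 x t} = 0 := by
      have hset : {t | 0 < t ∧ 1 - 1/2 ≤ Nex1 x t} = Set.Ioi 0 := by
        ext t
        simp only [Set.mem_setOf_eq, Set.mem_Ioi]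
        constructor
        · exact fun h => h.1
        · intro ht
          refine ⟨ht, ?_⟩
          norm_num
          exact nex1_half_le x ht
      rw [hset]
      exact csInf_Ioi
    have h2 : (4 * ‖x‖ : ℝ) ≤
        sInf {t | 0 < t ∧ 1/2 ≤ Nex2 (((2:ℝ) • (LinearMap.id : X →ₗ[ℝ] X)) x) (1 * t)} := by
      apply le_csInf
      · refine ⟨4 * ‖x‖, by positivity, ?_⟩
        rw [one_mul, Nex2, if_pos ⟨by rw [hTxn]; linarith, by positivity⟩, hTxn]
        rw [show 2 * ‖x‖ / (4 * ‖x‖) = 1/2 by field_simp; ring]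
        norm_num
      · rintro t ⟨ht, hval⟩
        rw [one_mul] at hval
        by_cases hcond : ‖((2:ℝ) • (LinearMap.id : X →ₗ[ℝ] X)) x‖ ≤ t ∧ 0 < t
        · rw [Nex2, if_pos hcond, hTxn] at hval
          have hd : 2 * ‖x‖ / t ≤ 1/2 := by linarith
          rw [div_le_iff₀ ht] at hd
          linarith
        · rw [Nex2, if_neg hcond] at hval
          norm_num at hval
    have := hineq x
    rw [h1, mul_zero] at this
    have := h2.trans this
    linarith
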